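/- arXiv:1404.5875 — 4 statements merged into one kernel-verified Lean document; each statement's English description precedes it below -/
import Mathlib

section
/- Let S be an ordered groupoid (a set with a multiplication and a partial order ≤ such that a ≤ b implies a·c ≤ b·c and c·a ≤ c·b for all c) and let f be a fuzzy subset of S which is fuzzy semiprime, i.e., f(x) ≥ f(x²) for every x ∈ S. Then for every fuzzy subset g of S such that g∘g ⪯ f, we have g ⪯ f. -/
/-- The composition `f ∘ g` of two fuzzy subsets (maps into `[0,1] ⊆ ℝ`) of an
ordered groupoid `S`: `(f ∘ g)(a) = sup { min (f x) (g y) | a ≤ x * y }`,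
and `0` when no such pair exists (which agrees with `Real.sSup_empty`). -/
noncomputable def fuzzyComp {S : Type*} [Mul S] [PartialOrder S] (f g : S → ℝ) : S → ℝ :=
  fun a => sSup {t : ℝ | ∃ x y : S, a ≤ x * y ∧ t = min (f x) (g y)}

/-- Theorem 4, (1) ⇒ (2): if `f` is fuzzy semiprime (`f(x²) ≤ f(x)` for all `x`),
then for every fuzzy subset `g` with `g ∘ g ⪯ f` we have `g ⪯ f`. -/
theorem stmt2 {S : Type*} [Mul S] [PartialOrder S]
    [CovariantClass S S (· * ·) (· ≤ ·)]
    [CovariantClass S S (Function.swap (· * ·)) (· ≤ ·)]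
    (f : S → ℝ) (hf : ∀ x, f x ∈ Set.Icc (0 : ℝ) 1)
    (hsp : ∀ x : S, f (x * x) ≤ f x) :
    ∀ g : S → ℝ, (∀ x, g x ∈ Set.Icc (0 : ℝ) 1) →
      (∀ a : S, fuzzyComp g g a ≤ f a) → ∀ x : S, g x ≤ f x := by
  intro g hg hgg x
  have hmem : g x ∈ {t : ℝ | ∃ u v : S, x * x ≤ u * v ∧ t = min (g u) (g v)} :=
    ⟨x, x, le_refl _, (min_self _).symm⟩
  have hbdd : BddAbove {t : ℝ | ∃ u v : S, x * x ≤ u * v ∧ t = min (g u) (g v)} := by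
    refine ⟨1, ?_⟩
    rintro t ⟨u, v, -, rfl⟩
    exact le_trans (min_le_left _ _) (hg u).2
  have h1 : g x ≤ fuzzyComp g g (x * x) := le_csSup hbdd hmem
  exact h1.trans ((hgg (x * x)).trans (hsp x))
end

section
/- Let S = {n ∈ ℕ : n ≥ 2} with the usual multiplication and the usual order of natural numbers (an ordered groupoid), and let f be the fuzzy subset of S defined by f(2) = 0 and f(n) = 1 for n > 2. Then: (i) for every fuzzy subset g of S with g∘g ⪯ f, we have g ⪯ f; and (ii) f is not fuzzy semiprime, since f(2) = 0 < 1 = f(2²) = f(4). Hence the condition '(g∘g ⪯ f implies g ⪯ f for all fuzzy subsets g)' does not imply fuzzy semiprimeness in general. -/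
/-- Multiplication on `S = {n ∈ ℕ : n ≥ 2}` inherited from `ℕ`. -/
instance : Mul {n : ℕ // 2 ≤ n} :=
  ⟨fun a b => ⟨a.1 * b.1, by have ha := a.2; have hb := b.2; nlinarith⟩⟩

/-- `S = {n ∈ ℕ : n ≥ 2}` with the usual multiplication and order is an
ordered groupoid: multiplication is compatible with the order (left). -/
instance : CovariantClass {n : ℕ // 2 ≤ n} {n : ℕ // 2 ≤ n} (· * ·) (· ≤ ·) :=
  ⟨fun a b c h => Subtype.coe_le_coe.mp (Nat.mul_le_mul_left a.1 h)⟩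

/-- compatibility on the right. -/
instance : CovariantClass {n : ℕ // 2 ≤ n} {n : ℕ // 2 ≤ n}
    (Function.swap (· * ·)) (· ≤ ·) :=
  ⟨fun a b c h => Subtype.coe_le_coe.mp (Nat.mul_le_mul_right a.1 h)⟩

/-- The fuzzy subset `f` of `S = {n ∈ ℕ : n ≥ 2}` with `f(2) = 0` and `f(n) = 1` for `n > 2`. -/
noncomputable def f3 : {n : ℕ // 2 ≤ n} → ℝ :=
  fun n => if n.1 = 2 then 0 else 1

/-- Theorem 4, failure of (2) ⇒ (1): for `S = {n ∈ ℕ : n ≥ 2}` and the fuzzy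
subset `f` with `f(2) = 0`, `f(n) = 1` for `n > 2`:
(i) every fuzzy subset `g` with `g ∘ g ⪯ f` satisfies `g ⪯ f`, yet
(ii) `f` is not fuzzy semiprime, since `f(2) = 0 < 1 = f(4)`. -/
theorem stmt3 :
    (∀ g : {n : ℕ // 2 ≤ n} → ℝ, (∀ x, g x ∈ Set.Icc (0 : ℝ) 1) →
      (∀ a, fuzzyComp g g a ≤ f3 a) → ∀ x, g x ≤ f3 x) ∧
    (¬ ∀ x : {n : ℕ // 2 ≤ n}, f3 (x * x) ≤ f3 x) ∧
    f3 ⟨2, by norm_num⟩ = 0 ∧ f3 ⟨4, by norm_num⟩ = 1 := by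
  refine ⟨?_, ?_, by simp [f3], by simp [f3]⟩
  · intro g hg hle x
    by_cases hx : x.1 = 2
    · -- g x ≤ fuzzyComp g g 2 ≤ f3 2 = 0
      have hmem : g x ∈ {t : ℝ | ∃ a b : {n : ℕ // 2 ≤ n}, x ≤ a * b ∧ t = min (g a) (g b)} := by
        refine ⟨x, x, ?_, (min_self _).symm⟩
        show x.1 ≤ x.1 * x.1
        have := x.2; nlinarith
      have hbdd : BddAbove {t : ℝ | ∃ a b : {n : ℕ // 2 ≤ n}, x ≤ a * b ∧ t = min (g a) (g b)} := by
        refine ⟨1, fun t ht => ?_⟩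
        obtain ⟨a, b, _, rfl⟩ := ht
        exact le_trans (min_le_left _ _) (hg a).2
      have h1 : g x ≤ fuzzyComp g g x := le_csSup hbdd hmem
      have h2 := hle x
      have h3 : f3 x = 0 := by simp [f3, hx]
      calc g x ≤ fuzzyComp g g x := h1
        _ ≤ f3 x := h2
    · have : f3 x = 1 := by simp [f3, hx]
      rw [this]; exact (hg x).2
  · intro h
    have := h ⟨2, by norm_num⟩
    have h4 : ((⟨2, by norm_num⟩ : {n : ℕ // 2 ≤ n}) * ⟨2, by norm_num⟩).1 = 4 := rfl
    simp [f3, h4] at this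
    linarith
end

section
/- Let S be an ordered groupoid (a set with a multiplication and a partial order ≤ such that a ≤ b implies a·c ≤ b·c and c·a ≤ c·b for all c) and let f be a fuzzy subset of S such that: (a) for all a, x, y ∈ S, a ≤ x·y implies min{f(x²), f(y²)} ≤ f(a); and (b) for every fuzzy subset g of S with g∘g ⪯ f, we have g ⪯ f. Then f is fuzzy semiprime, i.e., f(x) ≥ f(x²) for every x ∈ S. -/
/-- Theorem 5: let `f` be a fuzzy subset of an ordered groupoid `S` such that
(a) `a ≤ x * y` implies `min (f (x²)) (f (y²)) ≤ f a`, and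
(b) every fuzzy subset `g` with `g ∘ g ⪯ f` satisfies `g ⪯ f`.
Then `f` is fuzzy semiprime. -/
theorem stmt4 {S : Type*} [Mul S] [PartialOrder S]
    [CovariantClass S S (· * ·) (· ≤ ·)]
    [CovariantClass S S (Function.swap (· * ·)) (· ≤ ·)]
    (f : S → ℝ) (hf : ∀ x, f x ∈ Set.Icc (0 : ℝ) 1)
    (ha : ∀ a x y : S, a ≤ x * y → min (f (x * x)) (f (y * y)) ≤ f a)
    (hb : ∀ g : S → ℝ, (∀ x, g x ∈ Set.Icc (0 : ℝ) 1) →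
      (∀ a : S, fuzzyComp g g a ≤ f a) → ∀ x : S, g x ≤ f x) :
    ∀ x : S, f (x * x) ≤ f x := by
  intro x
  exact hb (fun z => f (z * z)) (fun z => hf _) (fun a => by
    apply Real.sSup_le
    · rintro t ⟨u, v, huv, rfl⟩
      exact ha a u v huv
    · exact (hf a).1) x
end

section
/- Let S be an ordered semigroup (a set with an associative multiplication and a partial order ≤ such that a ≤ b implies a·c ≤ b·c and c·a ≤ c·b for all c). Then the multiplication ∘ of fuzzy subsets of S is associative: (f∘g)∘h = f∘(g∘h) for all fuzzy subsets f, g, h of S. -/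
set_option linter.unusedSectionVars false

section Aux

variable {S : Type*} [Semigroup S] [PartialOrder S]
    [CovariantClass S S (· * ·) (· ≤ ·)]
    [CovariantClass S S (Function.swap (· * ·)) (· ≤ ·)]

lemma fc_bddAbove (f g : S → ℝ) (hf : ∀ x, f x ≤ 1) (a : S) :
    BddAbove {t : ℝ | ∃ x y : S, a ≤ x * y ∧ t = min (f x) (g y)} :=
  ⟨1, by rintro t ⟨x, y, _, rfl⟩; exact le_trans (min_le_left _ _) (hf x)⟩

lemma fc_nonneg (f g : S → ℝ) (hf : ∀ x, 0 ≤ f x) (hg : ∀ x, 0 ≤ g x) (a : S) :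
    0 ≤ fuzzyComp f g a :=
  Real.sSup_nonneg (by rintro t ⟨x, y, _, rfl⟩; exact le_min (hf x) (hg y))

lemma fc_le_one (f g : S → ℝ) (hf : ∀ x, f x ≤ 1) (a : S) :
    fuzzyComp f g a ≤ 1 :=
  Real.sSup_le (by rintro t ⟨x, y, _, rfl⟩; exact le_trans (min_le_left _ _) (hf x)) one_pos.le

/-- The triple set. -/
def Tset (f g h : S → ℝ) (a : S) : Set ℝ :=
  {t : ℝ | ∃ x y z : S, a ≤ x * y * z ∧ t = min (f x) (min (g y) (h z))}

lemma Tset_nonneg (f g h : S → ℝ) (hf : ∀ x, 0 ≤ f x) (hg : ∀ x, 0 ≤ g x)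
    (hh : ∀ x, 0 ≤ h x) (a : S) : 0 ≤ sSup (Tset f g h a) :=
  Real.sSup_nonneg (by
    rintro t ⟨x, y, z, _, rfl⟩
    exact le_min (hf x) (le_min (hg y) (hh z)))

lemma Tset_bddAbove (f g h : S → ℝ) (hf : ∀ x, f x ≤ 1) (a : S) :
    BddAbove (Tset f g h a) :=
  ⟨1, by rintro t ⟨x, y, z, _, rfl⟩; exact le_trans (min_le_left _ _) (hf x)⟩

lemma left_eq (f g h : S → ℝ) (hf : ∀ x, f x ∈ Set.Icc (0 : ℝ) 1)
    (hg : ∀ x, g x ∈ Set.Icc (0 : ℝ) 1) (hh : ∀ x, h x ∈ Set.Icc (0 : ℝ) 1) (a : S) :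
    fuzzyComp (fuzzyComp f g) h a = sSup (Tset f g h a) := by
  apply le_antisymm
  · apply Real.sSup_le _ (Tset_nonneg f g h (fun x => (hf x).1) (fun x => (hg x).1)
      (fun x => (hh x).1) a)
    rintro t ⟨u, z, huz, rfl⟩
    set Tu : Set ℝ := {s : ℝ | ∃ x y : S, u ≤ x * y ∧ s = min (f x) (g y)} with hTu
    rcases Tu.eq_empty_or_nonempty with he | hne
    · have : fuzzyComp f g u = 0 := by
        simp only [fuzzyComp, ← hTu, he, Real.sSup_empty]
      rw [this, min_eq_left (hh z).1]
      exact Tset_nonneg f g h (fun x => (hf x).1) (fun x => (hg x).1) (fun x => (hh x).1) a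
    · rcases le_or_gt (fuzzyComp f g u) (h z) with hle | hlt
      · rw [min_eq_left hle]
        apply csSup_le hne
        rintro s ⟨x, y, hxy, rfl⟩
        have hs_le : min (f x) (g y) ≤ h z :=
          le_trans (le_csSup (fc_bddAbove f g (fun x => (hf x).2) u) ⟨x, y, hxy, rfl⟩) hle
        have hmem : min (f x) (g y) ∈ Tset f g h a := by
          refine ⟨x, y, z, ?_, ?_⟩
          · calc a ≤ u * z := huz
              _ ≤ (x * y) * z := mul_le_mul_left hxy z
          · rw [← min_assoc]; exact (min_eq_left hs_le).symm
        exact le_csSup (Tset_bddAbove f g h (fun x => (hf x).2) a) hmem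
      · rw [min_eq_right hlt.le]
        obtain ⟨s, hs, hzs⟩ := exists_lt_of_lt_csSup hne hlt
        obtain ⟨x, y, hxy, rfl⟩ := hs
        have hmem : h z ∈ Tset f g h a := by
          refine ⟨x, y, z, ?_, ?_⟩
          · calc a ≤ u * z := huz
              _ ≤ (x * y) * z := mul_le_mul_left hxy z
          · rw [← min_assoc]; exact (min_eq_right hzs.le).symm
        exact le_csSup (Tset_bddAbove f g h (fun x => (hf x).2) a) hmem
  · apply Real.sSup_le _ (fc_nonneg (fuzzyComp f g) h
      (fun u => fc_nonneg f g (fun x => (hf x).1) (fun x => (hg x).1) u)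
      (fun x => (hh x).1) a)
    rintro t ⟨x, y, z, haxyz, rfl⟩
    have h1 : min (f x) (g y) ≤ fuzzyComp f g (x * y) :=
      le_csSup (fc_bddAbove f g (fun x => (hf x).2) (x * y)) ⟨x, y, le_refl _, rfl⟩
    have h2 : min (f x) (min (g y) (h z)) ≤ min (fuzzyComp f g (x * y)) (h z) := by
      rw [← min_assoc]
      exact min_le_min h1 le_rfl
    refine le_trans h2 (le_csSup ?_ ⟨x * y, z, haxyz, rfl⟩)
    exact fc_bddAbove (fuzzyComp f g) h
      (fun u => fc_le_one f g (fun x => (hf x).2) u) a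

lemma right_eq (f g h : S → ℝ) (hf : ∀ x, f x ∈ Set.Icc (0 : ℝ) 1)
    (hg : ∀ x, g x ∈ Set.Icc (0 : ℝ) 1) (hh : ∀ x, h x ∈ Set.Icc (0 : ℝ) 1) (a : S) :
    fuzzyComp f (fuzzyComp g h) a = sSup (Tset f g h a) := by
  apply le_antisymm
  · apply Real.sSup_le _ (Tset_nonneg f g h (fun x => (hf x).1) (fun x => (hg x).1)
      (fun x => (hh x).1) a)
    rintro t ⟨x, u, hxu, rfl⟩
    set Tu : Set ℝ := {s : ℝ | ∃ y z : S, u ≤ y * z ∧ s = min (g y) (h z)} with hTu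
    rcases Tu.eq_empty_or_nonempty with he | hne
    · have : fuzzyComp g h u = 0 := by
        simp only [fuzzyComp, ← hTu, he, Real.sSup_empty]
      rw [this, min_eq_right (hf x).1]
      exact Tset_nonneg f g h (fun x => (hf x).1) (fun x => (hg x).1) (fun x => (hh x).1) a
    · rcases le_or_gt (fuzzyComp g h u) (f x) with hle | hlt
      · rw [min_eq_right hle]
        apply csSup_le hne
        rintro s ⟨y, z, hyz, rfl⟩
        have hs_le : min (g y) (h z) ≤ f x :=
          le_trans (le_csSup (fc_bddAbove g h (fun x => (hg x).2) u) ⟨y, z, hyz, rfl⟩) hle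
        have hmem : min (g y) (h z) ∈ Tset f g h a := by
          refine ⟨x, y, z, ?_, ?_⟩
          · calc a ≤ x * u := hxu
              _ ≤ x * (y * z) := mul_le_mul_right hyz x
              _ = x * y * z := (mul_assoc x y z).symm
          · rw [min_eq_right hs_le]
        exact le_csSup (Tset_bddAbove f g h (fun x => (hf x).2) a) hmem
      · rw [min_eq_left hlt.le]
        obtain ⟨s, hs, hzs⟩ := exists_lt_of_lt_csSup hne hlt
        obtain ⟨y, z, hyz, rfl⟩ := hs
        have hmem : f x ∈ Tset f g h a := by
          refine ⟨x, y, z, ?_, ?_⟩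
          · calc a ≤ x * u := hxu
              _ ≤ x * (y * z) := mul_le_mul_right hyz x
              _ = x * y * z := (mul_assoc x y z).symm
          · rw [min_eq_left hzs.le]
        exact le_csSup (Tset_bddAbove f g h (fun x => (hf x).2) a) hmem
  · apply Real.sSup_le _ (fc_nonneg f (fuzzyComp g h) (fun x => (hf x).1)
      (fun u => fc_nonneg g h (fun x => (hg x).1) (fun x => (hh x).1) u) a)
    rintro t ⟨x, y, z, haxyz, rfl⟩
    have h1 : min (g y) (h z) ≤ fuzzyComp g h (y * z) :=
      le_csSup (fc_bddAbove g h (fun x => (hg x).2) (y * z)) ⟨y, z, le_refl _, rfl⟩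
    have h2 : min (f x) (min (g y) (h z)) ≤ min (f x) (fuzzyComp g h (y * z)) :=
      min_le_min le_rfl h1
    refine le_trans h2 (le_csSup ?_ ⟨x, y * z, by rwa [← mul_assoc], rfl⟩)
    exact fc_bddAbove f (fuzzyComp g h) (fun x => (hf x).2) a

end Aux

/-- In an ordered semigroup `S` (associative multiplication compatible with the
partial order), the composition of fuzzy subsets is associative:
`(f ∘ g) ∘ h = f ∘ (g ∘ h)`. -/
theorem stmt8 {S : Type*} [Semigroup S] [PartialOrder S]
    [CovariantClass S S (· * ·) (· ≤ ·)]
    [CovariantClass S S (Function.swap (· * ·)) (· ≤ ·)]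
    (f g h : S → ℝ) (hf : ∀ x, f x ∈ Set.Icc (0 : ℝ) 1)
    (hg : ∀ x, g x ∈ Set.Icc (0 : ℝ) 1) (hh : ∀ x, h x ∈ Set.Icc (0 : ℝ) 1) :
    fuzzyComp (fuzzyComp f g) h = fuzzyComp f (fuzzyComp g h) := by
  funext a
  rw [left_eq f g h hf hg hh a, right_eq f g h hf hg hh a]
end
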